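/- Let I ⊆ ℝ be an open interval and let f : ℝ → ℝ be continuously differentiable on I, with derivative f'. Let A be an n×n Hermitian complex matrix whose eigenvalues all lie in I, and let H be an n×n Hermitian complex matrix. Then the function t ↦ Re Tr( f(A + t·H) ) is differentiable at t = 0 with derivative Re Tr( f'(A) · H ), where for a Hermitian matrix M, f(M) and f'(A) are defined by applying f (resp. f') to the eigenvalues via the continuous functional calculus. -/

import Mathlib

open Matrix



namespace Stmt13Aux

variable {n : ℕ}

lemma L1 (W : Matrix (Fin n) (Fin n) ℂ) (a b : Fin n → ℝ) :
    trace (star W * diagonal (fun i => (a i : ℂ)) * W * diagonal (fun i => (b i : ℂ)))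
      = ((∑ j, ∑ i, a i * b j * ‖W i j‖^2 : ℝ) : ℂ) := by
  rw [Matrix.trace]
  push_cast
  refine Finset.sum_congr rfl fun j _ => ?_
  rw [Matrix.diag_apply, Matrix.mul_diagonal, Matrix.mul_apply, Finset.sum_mul]
  refine Finset.sum_congr rfl fun i _ => ?_
  rw [Matrix.mul_diagonal, Matrix.star_apply, Complex.star_def]
  have h := RCLike.conj_mul (K := ℂ) (W i j)
  calc (starRingEnd ℂ) (W i j) * (a i : ℂ) * W i j * (b j : ℂ)
      = ((starRingEnd ℂ) (W i j) * W i j) * (a i : ℂ) * (b j : ℂ) := by ring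
    _ = _ := by
        rw [h]
        simp only [RCLike.ofReal_mul, Complex.ofReal_mul, Complex.coe_algebraMap,
          RCLike.ofReal_pow, Complex.ofReal_pow]
        ring

lemma L2 (U V : Matrix (Fin n) (Fin n) ℂ) (a b : Fin n → ℝ) :
    trace ((U * diagonal (fun i => (a i : ℂ)) * star U) * (V * diagonal (fun i => (b i : ℂ)) * star V))
      = ((∑ j, ∑ i, a i * b j * ‖(star U * V) i j‖^2 : ℝ) : ℂ) := by
  have h : (U * diagonal (fun i => (a i : ℂ)) * star U) * (V * diagonal (fun i => (b i : ℂ)) * star V)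
      = ((U * diagonal (fun i => (a i : ℂ)) * star U) * (V * diagonal (fun i => (b i : ℂ)))) * star V := by
    simp only [mul_assoc]
  rw [h, trace_mul_comm]
  have h2 : star V * (U * diagonal (fun i => (a i : ℂ)) * star U * (V * diagonal (fun i => (b i : ℂ))))
      = star (star U * V) * diagonal (fun i => (a i : ℂ)) * (star U * V) * diagonal (fun i => (b i : ℂ)) := by
    simp only [Matrix.star_mul, star_star, mul_assoc]
  rw [h2, L1]

lemma rowsum (W : Matrix (Fin n) (Fin n) ℂ) (h : W * star W = 1) (i : Fin n) :
    ∑ j, ‖W i j‖^2 = 1 := by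
  have h2 : (W * star W) i i = (1 : Matrix (Fin n) (Fin n) ℂ) i i := by rw [h]
  rw [Matrix.mul_apply, Matrix.one_apply_eq] at h2
  have h3 : ∀ j, W i j * star W j i = ((‖W i j‖^2 : ℝ) : ℂ) := fun j => by
    rw [Matrix.star_apply, Complex.star_def]
    exact_mod_cast RCLike.mul_conj (K := ℂ) (W i j)
  rw [Finset.sum_congr rfl fun j _ => h3 j] at h2
  exact_mod_cast h2

lemma colsum (W : Matrix (Fin n) (Fin n) ℂ) (h : star W * W = 1) (j : Fin n) :
    ∑ i, ‖W i j‖^2 = 1 := by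
  have := rowsum (star W) (by rw [star_star]; exact h) j
  simpa only [Matrix.star_apply, norm_star] using this

lemma conj_diag_apply (W : Matrix (Fin n) (Fin n) ℂ) (a : Fin n → ℝ) (j : Fin n) :
    (star W * diagonal (fun i => (a i : ℂ)) * W) j j = ((∑ i, a i * ‖W i j‖^2 : ℝ) : ℂ) := by
  rw [Matrix.mul_apply]
  push_cast
  refine Finset.sum_congr rfl fun i _ => ?_
  rw [Matrix.mul_diagonal, Matrix.star_apply, Complex.star_def]
  have h := RCLike.conj_mul (K := ℂ) (W i j)
  calc (starRingEnd ℂ) (W i j) * (a i : ℂ) * W i j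
      = ((starRingEnd ℂ) (W i j) * W i j) * (a i : ℂ) := by ring
    _ = _ := by
        rw [h]
        simp only [RCLike.ofReal_mul, Complex.ofReal_mul, Complex.coe_algebraMap,
          RCLike.ofReal_pow, Complex.ofReal_pow]
        ring

lemma quad_bound (V X : Matrix (Fin n) (Fin n) ℂ) (j : Fin n) (hV : ∀ k, ‖V k j‖ ≤ 1) :
    ‖(star V * X * V) j j‖ ≤ ∑ k, ∑ l, ‖X k l‖ := by
  rw [Matrix.mul_apply]
  calc ‖∑ l, (star V * X) j l * V l j‖ ≤ ∑ l, ‖(star V * X) j l * V l j‖ := norm_sum_le _ _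
    _ ≤ ∑ l, ∑ k, ‖X k l‖ := by
        refine Finset.sum_le_sum fun l _ => ?_
        rw [norm_mul]
        calc ‖(star V * X) j l‖ * ‖V l j‖ ≤ ‖(star V * X) j l‖ * 1 := by
              exact mul_le_mul_of_nonneg_left (hV l) (norm_nonneg _)
          _ = ‖∑ k, star V j k * X k l‖ := by rw [mul_one, Matrix.mul_apply]
          _ ≤ ∑ k, ‖star V j k * X k l‖ := norm_sum_le _ _
          _ ≤ ∑ k, ‖X k l‖ := by
              refine Finset.sum_le_sum fun k _ => ?_
              rw [norm_mul, Matrix.star_apply, norm_star]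
              calc ‖V k j‖ * ‖X k l‖ ≤ 1 * ‖X k l‖ :=
                    mul_le_mul_of_nonneg_right (hV k) (norm_nonneg _)
                _ = ‖X k l‖ := one_mul _
    _ = ∑ k, ∑ l, ‖X k l‖ := Finset.sum_comm


lemma cfc_spectral {B : Matrix (Fin n) (Fin n) ℂ} (hB : B.IsHermitian) (g : ℝ → ℝ) :
    cfc g B = (hB.eigenvectorUnitary : Matrix (Fin n) (Fin n) ℂ) *
      diagonal (fun i => ((g (hB.eigenvalues i)) : ℂ)) *
      star (hB.eigenvectorUnitary : Matrix (Fin n) (Fin n) ℂ) := by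
  rw [hB.cfc_eq]
  rfl

lemma key0 {B : Matrix (Fin n) (Fin n) ℂ} (hB : B.IsHermitian) (g : ℝ → ℝ) :
    (cfc g B).trace = ((∑ j, g (hB.eigenvalues j) : ℝ) : ℂ) := by
  rw [cfc_spectral hB g, trace_mul_cycle,
    (Matrix.mem_unitaryGroup_iff').mp (hB.eigenvectorUnitary).2, one_mul, trace_diagonal]
  push_cast
  rfl

lemma key1 {A B : Matrix (Fin n) (Fin n) ℂ} (hA : A.IsHermitian) (hB : B.IsHermitian)
    (g h : ℝ → ℝ) :
    ((cfc g A) * (cfc h B)).trace =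
      ((∑ j, ∑ i, g (hA.eigenvalues i) * h (hB.eigenvalues j) *
        ‖((star (hA.eigenvectorUnitary : Matrix (Fin n) (Fin n) ℂ)) *
          (hB.eigenvectorUnitary : Matrix (Fin n) (Fin n) ℂ)) i j‖^2 : ℝ) : ℂ) := by
  rw [cfc_spectral hA g, cfc_spectral hB h]
  exact L2 _ _ _ _

lemma cfc_id_eq {B : Matrix (Fin n) (Fin n) ℂ} (hB : B.IsHermitian) :
    cfc (fun x : ℝ => x) B = B := by
  have hB' : IsSelfAdjoint B := hB
  exact cfc_id' ℝ B

lemma hsq_eq {H : Matrix (Fin n) (Fin n) ℂ} (hH : H.IsHermitian) :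
    (trace (H * H)).re = ∑ i, ∑ j, ‖H i j‖^2 := by
  have happ : ∀ i j, H j i = star (H i j) := fun i j => by
    conv_lhs => rw [← hH]
    rfl
  rw [Matrix.trace]
  rw [Complex.re_sum]
  refine Finset.sum_congr rfl fun i _ => ?_
  rw [Matrix.diag_apply, Matrix.mul_apply]
  rw [Complex.re_sum]
  refine Finset.sum_congr rfl fun j _ => ?_
  rw [happ i j, Complex.star_def]
  have := RCLike.mul_conj (K := ℂ) (H i j)
  rw [this]
  norm_cast

lemma near_est {I : Set ℝ} (f f' : ℝ → ℝ) (hderiv : ∀ x ∈ I, HasDerivAt f (f' x) x)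
    {K : Set ℝ} (hKc : Convex ℝ K) (hKI : K ⊆ I) {ε δ : ℝ}
    {x y : ℝ} (hx : x ∈ K) (hy : y ∈ K) (h1 : |y - x| ≤ δ)
    (hUC : ∀ z ∈ K, |z - x| ≤ δ → |f' z - f' x| ≤ ε) :
    |f y - f x - f' x * (y - x)| ≤ ε * |y - x| := by
  set s : Set ℝ := K ∩ Metric.closedBall x δ with hs
  have hconv : Convex ℝ s := hKc.inter (convex_closedBall x δ)
  have hxs : x ∈ s := ⟨hx, Metric.mem_closedBall_self (le_trans (abs_nonneg _) h1)⟩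
  have hys : y ∈ s := ⟨hy, by rwa [Metric.mem_closedBall, Real.dist_eq]⟩
  have hd : ∀ z ∈ s, HasDerivWithinAt (fun w => f w - f' x * w) (f' z - f' x) s z := by
    intro z hz
    have h1 := (hderiv z (hKI hz.1)).hasDerivWithinAt (s := s)
    have h2 : HasDerivWithinAt (fun w => f' x * w) (f' x) s z := by
      simpa using ((hasDerivAt_id z).const_mul (f' x)).hasDerivWithinAt (s := s)
    exact h1.sub h2
  have hbound : ∀ z ∈ s, ‖f' z - f' x‖ ≤ ε := by
    intro z hz
    rw [Real.norm_eq_abs]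
    exact hUC z hz.1 (by have := hz.2; rwa [Metric.mem_closedBall, Real.dist_eq] at this)
  have := hconv.norm_image_sub_le_of_norm_hasDerivWithin_le hd hbound hxs hys
  rw [Real.norm_eq_abs, Real.norm_eq_abs] at this
  calc |f y - f x - f' x * (y - x)| = |f y - f' x * y - (f x - f' x * x)| := by ring_nf
    _ ≤ ε * |y - x| := this

lemma pointwise_est {I : Set ℝ} (f f' : ℝ → ℝ) (hderiv : ∀ x ∈ I, HasDerivAt f (f' x) x)
    {K : Set ℝ} (hKc : Convex ℝ K) (hKI : K ⊆ I) {ε δ B2 : ℝ} (hδ : 0 < δ)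
    (hε : 0 ≤ ε) (hB2 : 0 ≤ B2)
    (hUC : ∀ x ∈ K, ∀ y ∈ K, |y - x| ≤ δ → |f' y - f' x| ≤ ε)
    (hB : ∀ x ∈ K, ∀ y ∈ K, |f y - f x - f' x * (y - x)| ≤ B2)
    {x y : ℝ} (hx : x ∈ K) (hy : y ∈ K) {s : ℝ} (hs : 0 < s) :
    |f y - f x - f' x * (y - x)| ≤ ε * s / 2 + (ε / (2*s) + B2/δ^2) * (y - x)^2 := by
  rcases le_or_gt (|y - x|) δ with hcase | hcase
  · have h1 : |f y - f x - f' x * (y - x)| ≤ ε * |y - x| :=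
      near_est f f' hderiv hKc hKI hx hy hcase (fun z hz h => hUC x hx z hz h)
    have h2 : ε * |y - x| ≤ ε * s / 2 + ε / (2*s) * (y - x)^2 := by
      set q := ε / (2*s) with hqdef
      have hq : 0 ≤ q := by positivity
      have hεq : ε = q * (2*s) := by
        rw [hqdef, div_mul_cancel₀ _ (by positivity : (2:ℝ)*s ≠ 0)]
      rw [hεq]
      nlinarith [sq_nonneg (|y - x| - s), sq_abs (y - x), abs_nonneg (y - x),
        mul_nonneg hq (sq_nonneg (|y - x| - s))]
    nlinarith [sq_nonneg (y - x), div_nonneg hB2 (sq_nonneg δ)]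
  · have h1 : |f y - f x - f' x * (y - x)| ≤ B2 := hB x hx y hy
    have h2 : δ^2 ≤ (y - x)^2 := by nlinarith [abs_nonneg (y - x), sq_abs (y - x)]
    have h3 : B2 ≤ B2 / δ^2 * (y - x)^2 := by
      rw [div_mul_eq_mul_div, le_div_iff₀ (by positivity)]
      nlinarith
    have h4 : 0 ≤ ε / (2*s) * (y - x)^2 := by positivity
    nlinarith [mul_nonneg hε hs.le]

lemma sum_one_entries (g : Fin n → Fin n → ℝ) :
    ∑ j, ∑ i, g i j * ‖(1 : Matrix (Fin n) (Fin n) ℂ) i j‖^2 = ∑ i, g i i := by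
  have h : ∀ i j : Fin n, ‖(1 : Matrix (Fin n) (Fin n) ℂ) i j‖^2 = if i = j then 1 else 0 := by
    intro i j
    rw [Matrix.one_apply]
    split <;> simp
  simp only [h, mul_ite, mul_one, mul_zero]
  rw [Finset.sum_comm]
  simp [Finset.sum_ite_eq]

lemma herm_smul {t : ℝ} {H : Matrix (Fin n) (Fin n) ℂ} (hH : H.IsHermitian) :
    (t • H).IsHermitian := by
  have happ : ∀ i j, (starRingEnd ℂ) (H j i) = H i j := by
    intro i j
    have := congrFun (congrFun hH.eq i) j
    rwa [Matrix.conjTranspose_apply] at this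
  show (t • H)ᴴ = t • H
  ext i j
  rw [Matrix.conjTranspose_apply, Matrix.smul_apply, Matrix.smul_apply]
  show star ((t : ℝ) • H j i) = t • H i j
  rw [star_smul, star_trivial]
  show t • star (H j i) = t • H i j
  congr 1
  exact happ i j

lemma trace_split (A H X : Matrix (Fin n) (Fin n) ℂ) (t : ℝ) :
    trace (X * (A + t • H)) = trace (X * A) + (t : ℂ) * trace (X * H) := by
  rw [Matrix.mul_add, trace_add, mul_smul_comm, trace_smul]
  rw [Complex.real_smul]

lemma trace_sq_split (A H : Matrix (Fin n) (Fin n) ℂ) (t : ℝ) :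
    trace ((A + t • H) * (A + t • H)) + trace (A * A) - 2 * trace (A * (A + t • H))
      = ((t^2 : ℝ) : ℂ) * trace (H * H) := by
  simp only [Matrix.mul_add, Matrix.add_mul, smul_mul_assoc, mul_smul_comm, smul_smul,
    trace_add, trace_smul, Complex.real_smul]
  rw [trace_mul_comm H A]
  push_cast
  ring

lemma Icc_sub_of_cthickening {a b r : ℝ} (hab : a ≤ b) (hr : 0 ≤ r) {I : Set ℝ}
    (h : Metric.cthickening r (Set.Icc a b) ⊆ I) : Set.Icc (a - r) (b + r) ⊆ I := by
  intro x hx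
  apply h
  rcases hx with ⟨h1, h2⟩
  rcases le_total x a with hax | hax
  · exact Metric.mem_cthickening_of_dist_le x a r _ ⟨le_refl a, hab⟩
      (by rw [Real.dist_eq, abs_le]; constructor <;> linarith)
  · rcases le_total x b with hxb | hxb
    · exact Metric.mem_cthickening_of_dist_le x x r _ ⟨hax, hxb⟩
        (by rw [Real.dist_eq, abs_le]; constructor <;> linarith)
    · exact Metric.mem_cthickening_of_dist_le x b r _ ⟨hab, le_refl b⟩
        (by rw [Real.dist_eq, abs_le]; constructor <;> linarith)

lemma arith_eps {e0 nn qq : ℝ} (h0 : 0 < e0) (hq : 0 ≤ qq) (hn : 0 ≤ nn) :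
    e0 / (nn + qq + 1) * (nn + qq) ≤ e0 := by
  rw [div_mul_eq_mul_div, div_le_iff₀ (by linarith)]
  nlinarith

lemma arith_first {e e0 nn qq tt : ℝ} (h : e * (nn + qq) ≤ e0) (htt : 0 ≤ tt) :
    e * tt / 2 * nn + e * tt * qq / 2 ≤ e0 * tt / 2 := by
  nlinarith [mul_le_mul_of_nonneg_right h htt]

lemma arith_hq4 {β t0 δ e0 qq : ℝ} (hδ2 : 0 < δ^2)
    (h : t0 * (2*(β*δ^2)*(qq+1)) ≤ e0 * δ^2) : 2*β*t0*(qq+1) ≤ e0 := by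
  nlinarith [h, hδ2]

lemma arith_hq5 {β t0 qq e0 : ℝ} (h : 2*β*t0*(qq+1) ≤ e0) (hβt0 : 0 ≤ β*t0) (hq : 0 ≤ qq) :
    β*t0*qq ≤ e0/2 := by nlinarith

lemma arith_h1 {t t0 : ℝ} (h : |t| ≤ t0) : t^2 ≤ t0 * |t| := by
  nlinarith [sq_abs t, abs_nonneg t]

end Stmt13Aux

set_option maxHeartbeats 2000000 in
open Stmt13Aux in
/-- **Derivative of a trace functional defined by functional calculus** (Lemma 18 /
Theorem 28 of the paper, a strengthening of a result of Carlen): if `f : ℝ → ℝ` is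
continuously differentiable on an open interval `I` with derivative `f'`, `A` is Hermitian
with all eigenvalues in `I`, and `H` is Hermitian, then `t ↦ Re Tr f(A + t·H)` is
differentiable at `t = 0` with derivative `Re Tr(f'(A)·H)`.  Here `f(M)` denotes applying
`f` to the eigenvalues of the Hermitian matrix `M` via the continuous functional calculus. -/
theorem stmt13 {n : ℕ} (I : Set ℝ) (hIopen : IsOpen I) (hIinterval : Convex ℝ I)
    (f f' : ℝ → ℝ)
    (hderiv : ∀ x ∈ I, HasDerivAt f (f' x) x)
    (hcont : ContinuousOn f' I)
    (A H : Matrix (Fin n) (Fin n) ℂ)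
    (hA : A.IsHermitian) (hH : H.IsHermitian)
    (hspec : ∀ i, hA.eigenvalues i ∈ I) :
    HasDerivAt (fun t : ℝ => ((cfc f (A + t • H)).trace).re)
      (((cfc f' A) * H).trace.re) 0 := by
  classical
  rcases Nat.eq_zero_or_pos n with hn | hn
  · subst hn
    have h0 : ∀ (B : Matrix (Fin 0) (Fin 0) ℂ), B.trace = 0 := fun B => by
      simp [Matrix.trace]
    simp only [h0, Complex.zero_re]
    exact hasDerivAt_const 0 0
  haveI : Nonempty (Fin n) := Fin.pos_iff_nonempty.mp hn
  set lam : Fin n → ℝ := hA.eigenvalues with hlamdef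
  set U : Matrix (Fin n) (Fin n) ℂ := (hA.eigenvectorUnitary : Matrix (Fin n) (Fin n) ℂ)
    with hUdef
  have hU1 : U * star U = 1 := (Matrix.mem_unitaryGroup_iff).mp (hA.eigenvectorUnitary).2
  have hU2 : star U * U = 1 := (Matrix.mem_unitaryGroup_iff').mp (hA.eigenvectorUnitary).2
  set lmin : ℝ := Finset.univ.inf' Finset.univ_nonempty lam with hlmin
  set lmax : ℝ := Finset.univ.sup' Finset.univ_nonempty lam with hlmax
  have hminmem : lmin ∈ I := by
    obtain ⟨i, -, hi⟩ := Finset.exists_mem_eq_inf' Finset.univ_nonempty lam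
    rw [hlmin, hi]; exact hspec i
  have hmaxmem : lmax ∈ I := by
    obtain ⟨i, -, hi⟩ := Finset.exists_mem_eq_sup' Finset.univ_nonempty lam
    rw [hlmax, hi]; exact hspec i
  have hlmm : lmin ≤ lmax := by
    obtain ⟨i⟩ := (inferInstance : Nonempty (Fin n))
    exact le_trans (Finset.inf'_le lam (Finset.mem_univ i))
      (Finset.le_sup' lam (Finset.mem_univ i))
  have hIccI : Set.Icc lmin lmax ⊆ I := hIinterval.ordConnected.out hminmem hmaxmem
  obtain ⟨r, hr0, hrsub⟩ := (isCompact_Icc).exists_cthickening_subset_open hIopen hIccI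
  set K : Set ℝ := Set.Icc (lmin - r) (lmax + r) with hKdef
  have hKI : K ⊆ I := Icc_sub_of_cthickening hlmm hr0.le hrsub
  have hKconv : Convex ℝ K := convex_Icc _ _
  have hKcomp : IsCompact K := isCompact_Icc
  have hlamK : ∀ i, lam i ∈ K := fun i =>
    ⟨by have := Finset.inf'_le lam (Finset.mem_univ i); rw [← hlmin] at this; linarith,
     by have := Finset.le_sup' lam (Finset.mem_univ i); rw [← hlmax] at this; linarith⟩
  -- bounds on f and f' over K
  have hfc : ContinuousOn f K := fun x hx =>
    ((hderiv x (hKI hx)).continuousAt).continuousWithinAt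
  obtain ⟨Cf, hCf⟩ := hKcomp.exists_bound_of_continuousOn hfc
  obtain ⟨Cf', hCf'⟩ := hKcomp.exists_bound_of_continuousOn (hcont.mono hKI)
  set D : ℝ := (lmax + r) - (lmin - r) with hDdef
  have hD0 : 0 ≤ D := by rw [hDdef]; linarith
  have hKne : lmin - r ∈ K := ⟨le_refl _, by linarith⟩
  have hCf0 : 0 ≤ Cf := le_trans (norm_nonneg _) (hCf _ hKne)
  have hCf'0 : 0 ≤ Cf' := le_trans (norm_nonneg _) (hCf' _ hKne)
  set B2 : ℝ := 2*Cf + Cf'*D + 1 with hB2def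
  have hB2pos : 0 < B2 := by
    have := mul_nonneg hCf'0 hD0; rw [hB2def]; linarith
  have hBbound : ∀ x ∈ K, ∀ y ∈ K, |f y - f x - f' x * (y - x)| ≤ B2 := by
    intro x hx y hy
    have h1 : |f y| ≤ Cf := by rw [← Real.norm_eq_abs]; exact hCf y hy
    have h2 : |f x| ≤ Cf := by rw [← Real.norm_eq_abs]; exact hCf x hx
    have h3 : |f' x| ≤ Cf' := by rw [← Real.norm_eq_abs]; exact hCf' x hx
    have h4 : |y - x| ≤ D := by
      rcases hx with ⟨hx1, hx2⟩; rcases hy with ⟨hy1, hy2⟩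
      rw [abs_le]; constructor <;> (rw [hDdef]; linarith)
    have h5 : |f' x * (y - x)| ≤ Cf' * D := by
      rw [abs_mul]; exact mul_le_mul h3 h4 (abs_nonneg _) hCf'0
    rw [abs_le, hB2def]
    constructor <;>
      nlinarith [neg_abs_le (f y), le_abs_self (f y), neg_abs_le (f x), le_abs_self (f x),
        neg_abs_le (f' x * (y - x)), le_abs_self (f' x * (y - x))]
  have hUCgen := Metric.uniformContinuousOn_iff.mp
    (hKcomp.uniformContinuousOn_of_continuous (hcont.mono hKI))
  -- constants from H
  set q : ℝ := ((H * H).trace).re with hqdef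
  have hq0 : 0 ≤ q := by rw [hqdef, hsq_eq hH]; positivity
  set CH : ℝ := ∑ k, ∑ l, ‖H k l‖ with hCHdef
  have hCH0 : 0 ≤ CH := by rw [hCHdef]; positivity
  set c : ℝ := (((cfc f' A) * H).trace).re with hcdef
  show HasDerivAt _ c 0
  rw [hasDerivAt_iff_isLittleO, Asymptotics.isLittleO_iff]
  intro ε0 hε0
  set ε : ℝ := ε0 / (n + q + 1) with hεdef
  have hεpos : 0 < ε := by rw [hεdef]; positivity
  obtain ⟨δ0, hδ0, hUC0⟩ := hUCgen ε hεpos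
  set δ : ℝ := δ0/2 with hδdef
  have hδpos : 0 < δ := by rw [hδdef]; linarith
  have hUC : ∀ x ∈ K, ∀ y ∈ K, |y - x| ≤ δ → |f' y - f' x| ≤ ε := by
    intro x hx y hy h
    have := hUC0 y hy x hx (by rw [Real.dist_eq]; rw [hδdef] at h; linarith)
    rw [Real.dist_eq] at this
    exact this.le
  set t0 : ℝ := min (r / (CH + 1)) (ε0 * δ^2 / (2 * B2 * (q+1))) with ht0def
  have ht0pos : 0 < t0 := lt_min (by positivity) (by positivity)
  filter_upwards [Metric.ball_mem_nhds (0:ℝ) ht0pos] with t ht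
  rcases eq_or_ne t 0 with rfl | htne
  · simp
  have htabs : |t| < t0 := by
    rw [Metric.mem_ball, Real.dist_eq, sub_zero] at ht; exact ht
  have htpos : 0 < |t| := abs_pos.mpr htne
  -- eigen data of M = A + t • H
  have hMh : (A + t • H).IsHermitian := hA.add (herm_smul hH)
  set mu : Fin n → ℝ := hMh.eigenvalues with hmudef
  set V : Matrix (Fin n) (Fin n) ℂ := (hMh.eigenvectorUnitary : Matrix (Fin n) (Fin n) ℂ)
    with hVdef
  have hV1 : V * star V = 1 := (Matrix.mem_unitaryGroup_iff).mp (hMh.eigenvectorUnitary).2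
  have hV2 : star V * V = 1 := (Matrix.mem_unitaryGroup_iff').mp (hMh.eigenvectorUnitary).2
  set W : Matrix (Fin n) (Fin n) ℂ := star U * V with hWdef
  have hW1 : W * star W = 1 := by
    have h : W * star W = star U * (V * star V) * U := by
      rw [hWdef, Matrix.star_mul, star_star]; simp only [mul_assoc]
    rw [h, hV1, mul_one, hU2]
  have hW2 : star W * W = 1 := by
    have h : star W * W = star V * (U * star U) * V := by
      rw [hWdef, Matrix.star_mul, star_star]; simp only [mul_assoc]
    rw [h, hU1, mul_one, hV2]
  set P : Fin n → Fin n → ℝ := fun i j => ‖W i j‖^2 with hPdef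
  have hPnn : ∀ i j, 0 ≤ P i j := fun i j => sq_nonneg _
  have hProw : ∀ i, ∑ j, P i j = 1 := rowsum W hW1
  have hPcol : ∀ j, ∑ i, P i j = 1 := colsum W hW2
  have hPtot : ∑ j, ∑ i, P i j = n := by
    rw [Finset.sum_congr rfl fun j _ => hPcol j]
    simp
  -- column entries of V are bounded by 1
  have hVcol : ∀ j k, ‖V k j‖ ≤ 1 := by
    intro j k
    have h := colsum V hV2 j
    have h2 : ‖V k j‖^2 ≤ 1 := by
      rw [← h]
      exact Finset.single_le_sum (f := fun i => ‖V i j‖^2) (fun i _ => sq_nonneg _)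
        (Finset.mem_univ k)
    nlinarith [norm_nonneg (V k j)]
  -- conjugation identities
  have hAV : star V * A * V = star W * diagonal (fun i => (lam i : ℂ)) * W := by
    conv_lhs => rw [hA.spectral_theorem]
    rw [Unitary.conjStarAlgAut_apply, ← hUdef, hWdef]
    simp only [Matrix.star_mul, star_star, mul_assoc]
    rfl
  have hMV : star V * (A + t • H) * V = diagonal (fun i => (mu i : ℂ)) := by
    conv_lhs => rw [hMh.spectral_theorem]
    rw [Unitary.conjStarAlgAut_apply, ← hVdef]
    calc star V * ((V * diagonal (RCLike.ofReal ∘ mu)) * star V) * V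
        = (star V * V) * diagonal (RCLike.ofReal ∘ mu) * (star V * V) := by
          simp only [mul_assoc]
      _ = diagonal (RCLike.ofReal ∘ mu) := by rw [hV2, one_mul, mul_one]
      _ = diagonal (fun i => (mu i : ℂ)) := rfl
  -- location of the eigenvalues of M
  have hmuK : ∀ j, mu j ∈ K := by
    intro j
    have hAVjj : (star V * A * V) j j = ((∑ i, lam i * P i j : ℝ) : ℂ) := by
      rw [hAV]; exact conj_diag_apply W lam j
    have hMVjj : (star V * (A + t • H) * V) j j = ((mu j : ℝ) : ℂ) := by
      rw [hMV, Matrix.diagonal_apply_eq]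
    have hsum : star V * (A + t • H) * V = star V * A * V + t • (star V * H * V) := by
      rw [Matrix.mul_add, Matrix.add_mul, mul_smul_comm, smul_mul_assoc]
    have hentry := congrFun (congrFun hsum j) j
    rw [hMVjj, Matrix.add_apply, Matrix.smul_apply, hAVjj, Complex.real_smul] at hentry
    have h7 : ((mu j - ∑ i, lam i * P i j : ℝ) : ℂ) = (t : ℂ) * (star V * H * V) j j := by
      rw [Complex.ofReal_sub, hentry]
      ring
    have hHVjj : ‖(star V * H * V) j j‖ ≤ CH := quad_bound V H j (fun k => hVcol j k)
    have habs : |mu j - ∑ i, lam i * P i j| ≤ |t| * CH := by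
      rw [← Real.norm_eq_abs, ← Complex.norm_real, h7, norm_mul, Complex.norm_real, Real.norm_eq_abs]
      refine mul_le_mul_of_nonneg_left ?_ (abs_nonneg t)
      exact hHVjj
    have hconv1 : lmin ≤ ∑ i, lam i * P i j := by
      have : ∑ i, lmin * P i j ≤ ∑ i, lam i * P i j :=
        Finset.sum_le_sum fun i _ =>
          mul_le_mul_of_nonneg_right (Finset.inf'_le lam (Finset.mem_univ i)) (hPnn i j)
      rwa [← Finset.mul_sum, hPcol j, mul_one] at this
    have hconv2 : ∑ i, lam i * P i j ≤ lmax := by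
      have : ∑ i, lam i * P i j ≤ ∑ i, lmax * P i j :=
        Finset.sum_le_sum fun i _ =>
          mul_le_mul_of_nonneg_right (Finset.le_sup' lam (Finset.mem_univ i)) (hPnn i j)
      rwa [← Finset.mul_sum, hPcol j, mul_one] at this
    have htCH : |t| * CH ≤ r := by
      have h8 : |t| ≤ r / (CH + 1) := le_trans htabs.le (min_le_left _ _)
      calc |t| * CH ≤ (r / (CH + 1)) * CH := mul_le_mul_of_nonneg_right h8 hCH0
        _ ≤ r := by
            rw [div_mul_eq_mul_div, div_le_iff₀ (by positivity)]
            nlinarith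
    obtain ⟨ha1, ha2⟩ := abs_le.mp habs
    exact ⟨by linarith, by linarith⟩
  -- trace values as eigenvalue sums
  have hgt : ((cfc f (A + t • H)).trace).re = ∑ j, f (mu j) := by
    rw [key0 hMh f, Complex.ofReal_re]
  have hg0 : ((cfc f A).trace).re = ∑ i, f (lam i) := by
    rw [key0 hA f, Complex.ofReal_re]
  -- double-sum reductions
  have hS1 : ∑ j, ∑ i, P i j * f (mu j) = ∑ j, f (mu j) :=
    Finset.sum_congr rfl fun j _ => by rw [← Finset.sum_mul, hPcol j, one_mul]
  have hS2 : ∑ j, ∑ i, P i j * f (lam i) = ∑ i, f (lam i) := by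
    rw [Finset.sum_comm]
    exact Finset.sum_congr rfl fun i _ => by rw [← Finset.sum_mul, hProw i, one_mul]
  have hS4 : ∑ j, ∑ i, P i j * (f' (lam i) * lam i) = ∑ i, f' (lam i) * lam i := by
    rw [Finset.sum_comm]
    exact Finset.sum_congr rfl fun i _ => by rw [← Finset.sum_mul, hProw i, one_mul]
  -- trace identities through the double sums
  have hT1 : ((cfc f' A * (A + t • H)).trace).re = ∑ j, ∑ i, P i j * (f' (lam i) * mu j) := by
    have h := key1 hA hMh f' (fun x : ℝ => x)
    rw [cfc_id_eq hMh] at h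
    rw [h, Complex.ofReal_re]
    refine Finset.sum_congr rfl fun j _ => Finset.sum_congr rfl fun i _ => ?_
    simp only [hPdef, hWdef, hUdef, hVdef, hlamdef, hmudef]
    ring
  have hT0 : ((cfc f' A * A).trace).re = ∑ i, f' (lam i) * lam i := by
    have h := key1 hA hA f' (fun x : ℝ => x)
    rw [cfc_id_eq hA] at h
    rw [h, Complex.ofReal_re, ← hUdef, hU2]
    exact sum_one_entries (fun i j => f' (lam i) * lam j)
  have htc : t * c = (∑ j, ∑ i, P i j * (f' (lam i) * mu j)) - ∑ i, f' (lam i) * lam i := by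
    have hsplit := congrArg Complex.re (trace_split A H (cfc f' A) t)
    rw [Complex.add_re, Complex.re_ofReal_mul, hT0] at hsplit
    rw [hT1] at hsplit
    rw [hcdef]
    linarith only [hsplit, hT1]
  -- the quadratic sum
  have hTAM : ((A * (A + t • H)).trace).re = ∑ j, ∑ i, P i j * (lam i * mu j) := by
    have h := key1 hA hMh (fun x : ℝ => x) (fun x : ℝ => x)
    rw [cfc_id_eq hA, cfc_id_eq hMh] at h
    rw [h, Complex.ofReal_re]
    refine Finset.sum_congr rfl fun j _ => Finset.sum_congr rfl fun i _ => ?_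
    simp only [hPdef, hWdef, hUdef, hVdef, hlamdef, hmudef]
    ring
  have hTMM : (((A + t • H) * (A + t • H)).trace).re = ∑ j, mu j ^ 2 := by
    have h := key1 hMh hMh (fun x : ℝ => x) (fun x : ℝ => x)
    rw [cfc_id_eq hMh] at h
    rw [h, Complex.ofReal_re, ← hVdef, hV2]
    rw [sum_one_entries (fun i j => mu i * mu j)]
    exact Finset.sum_congr rfl fun i _ => by ring
  have hTAA : ((A * A).trace).re = ∑ i, lam i ^ 2 := by
    have h := key1 hA hA (fun x : ℝ => x) (fun x : ℝ => x)
    rw [cfc_id_eq hA] at h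
    rw [h, Complex.ofReal_re, ← hUdef, hU2]
    rw [sum_one_entries (fun i j => lam i * lam j)]
    exact Finset.sum_congr rfl fun i _ => by ring
  have hSmu : ∑ j, ∑ i, P i j * mu j ^ 2 = ∑ j, mu j ^ 2 :=
    Finset.sum_congr rfl fun j _ => by rw [← Finset.sum_mul, hPcol j, one_mul]
  have hSlam : ∑ j, ∑ i, P i j * lam i ^ 2 = ∑ i, lam i ^ 2 := by
    rw [Finset.sum_comm]
    exact Finset.sum_congr rfl fun i _ => by rw [← Finset.sum_mul, hProw i, one_mul]
  have hQ : ∑ j, ∑ i, P i j * (mu j - lam i)^2 = t^2 * q := by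
    have hkey := congrArg Complex.re (trace_sq_split A H t)
    rw [Complex.sub_re, Complex.add_re, Complex.re_ofReal_mul] at hkey
    have h2re : ((2 : ℂ) * ((A * (A + t • H)).trace)).re = 2 * ((A * (A + t • H)).trace).re := by
      have : ((2 : ℝ) : ℂ) = (2 : ℂ) := by norm_num
      rw [← this, Complex.re_ofReal_mul]
    rw [h2re, hTMM, hTAA, hTAM, ← hqdef] at hkey
    have hrhs : ∑ j, ∑ i, P i j * (mu j - lam i)^2
        = ∑ j, ∑ i, (P i j * mu j ^ 2 - 2 * (P i j * (lam i * mu j)) + P i j * lam i ^ 2) :=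
      Finset.sum_congr rfl fun j _ => Finset.sum_congr rfl fun i _ => by ring
    rw [hrhs]
    simp only [Finset.sum_add_distrib, Finset.sum_sub_distrib, ← Finset.mul_sum]
    rw [hSmu, hSlam]
    rw [← hTAM] at hkey ⊢
    linarith only [hkey]
  -- final assembly
  have hzero : A + (0:ℝ) • H = A := by simp
  rw [hzero]
  simp only [sub_zero, smul_eq_mul, Real.norm_eq_abs]
  rw [hgt, hg0]
  have hR : (∑ j, f (mu j)) - (∑ i, f (lam i)) - t * c
      = ∑ j, ∑ i, P i j * (f (mu j) - f (lam i) - f' (lam i) * (mu j - lam i)) := by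
    rw [htc]
    have hrhs : ∑ j, ∑ i, P i j * (f (mu j) - f (lam i) - f' (lam i) * (mu j - lam i))
        = ∑ j, ∑ i, (P i j * f (mu j) - P i j * f (lam i)
            - (P i j * (f' (lam i) * mu j) - P i j * (f' (lam i) * lam i))) :=
      Finset.sum_congr rfl fun j _ => Finset.sum_congr rfl fun i _ => by ring
    rw [hrhs]
    simp only [Finset.sum_sub_distrib]
    rw [hS1, hS2, hS4]
  rw [hR]
  set C2 : ℝ := ε / (2*|t|) + B2/δ^2 with hC2def
  have hC2nn : 0 ≤ C2 := by rw [hC2def]; positivity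
  have hptw : ∀ j i, |f (mu j) - f (lam i) - f' (lam i) * (mu j - lam i)|
      ≤ ε * |t| / 2 + C2 * (mu j - lam i)^2 := fun j i => by
    rw [hC2def]
    exact pointwise_est f f' hderiv hKconv hKI hδpos hεpos.le hB2pos.le hUC hBbound
      (hlamK i) (hmuK j) htpos
  have habs1 : |∑ j, ∑ i, P i j * (f (mu j) - f (lam i) - f' (lam i) * (mu j - lam i))|
      ≤ ∑ j, ∑ i, P i j * (ε * |t| / 2 + C2 * (mu j - lam i)^2) := by
    calc |∑ j, ∑ i, P i j * (f (mu j) - f (lam i) - f' (lam i) * (mu j - lam i))|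
        ≤ ∑ j, |∑ i, P i j * (f (mu j) - f (lam i) - f' (lam i) * (mu j - lam i))| :=
          Finset.abs_sum_le_sum_abs _ _
      _ ≤ ∑ j, ∑ i, |P i j * (f (mu j) - f (lam i) - f' (lam i) * (mu j - lam i))| :=
          Finset.sum_le_sum fun j _ => Finset.abs_sum_le_sum_abs _ _
      _ ≤ ∑ j, ∑ i, P i j * (ε * |t| / 2 + C2 * (mu j - lam i)^2) := by
          refine Finset.sum_le_sum fun j _ => Finset.sum_le_sum fun i _ => ?_
          rw [abs_mul, abs_of_nonneg (hPnn i j)]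
          exact mul_le_mul_of_nonneg_left (hptw j i) (hPnn i j)
  have hsum2 : ∑ j, ∑ i, P i j * (ε * |t| / 2 + C2 * (mu j - lam i)^2)
      = ε * |t| / 2 * n + C2 * (t^2 * q) := by
    have hx : ∑ j, ∑ i, P i j * (ε * |t| / 2 + C2 * (mu j - lam i)^2)
        = ∑ j, ∑ i, (ε * |t| / 2 * P i j + C2 * (P i j * (mu j - lam i)^2)) :=
      Finset.sum_congr rfl fun j _ => Finset.sum_congr rfl fun i _ => by ring
    rw [hx]
    simp only [Finset.sum_add_distrib, ← Finset.mul_sum]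
    rw [hPtot, hQ]
  have hmid : ε / (2*|t|) * (t^2*q) = ε * |t| * q / 2 := by
    have ht2 : t^2 = |t| * |t| := by rw [← sq_abs]; ring
    rw [ht2]
    field_simp
  have hfirst : ε * |t| / 2 * n + ε * |t| * q / 2 ≤ ε0 * |t| / 2 := by
    have hεval : ε * (n + q) ≤ ε0 := by
      rw [hεdef]
      exact arith_eps hε0 hq0 (Nat.cast_nonneg n)
    exact arith_first hεval (abs_nonneg t)
  have hsecond : B2/δ^2 * (t^2 * q) ≤ ε0 * |t| / 2 := by
    set β : ℝ := B2/δ^2 with hβdef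
    have hβ0 : 0 ≤ β := by rw [hβdef]; positivity
    have hβδ : β * δ^2 = B2 := div_mul_cancel₀ _ (by positivity)
    have ht0b : t0 ≤ ε0 * δ^2 / (2*B2*(q+1)) := min_le_right _ _
    have ht0b' : t0 * (2*B2*(q+1)) ≤ ε0 * δ^2 := (le_div_iff₀ (by positivity)).mp ht0b
    have hδ2 : 0 < δ^2 := by positivity
    have hq4 : 2 * β * t0 * (q+1) ≤ ε0 := by
      rw [← hβδ] at ht0b'
      exact arith_hq4 hδ2 ht0b'
    have hq5 : β * t0 * q ≤ ε0/2 := arith_hq5 hq4 (mul_nonneg hβ0 ht0pos.le) hq0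
    have h1 : t^2 ≤ t0 * |t| := arith_h1 htabs.le
    calc β * (t^2 * q) ≤ β * (t0 * |t| * q) := by
          refine mul_le_mul_of_nonneg_left ?_ hβ0
          calc t^2 * q ≤ (t0 * |t|) * q := mul_le_mul_of_nonneg_right h1 hq0
            _ = t0 * |t| * q := by ring
      _ = (β * t0 * q) * |t| := by ring
      _ ≤ (ε0/2) * |t| := mul_le_mul_of_nonneg_right hq5 (abs_nonneg t)
      _ = ε0 * |t| / 2 := by ring
  calc |∑ j, ∑ i, P i j * (f (mu j) - f (lam i) - f' (lam i) * (mu j - lam i))|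
      ≤ ε * |t| / 2 * n + C2 * (t^2 * q) := by rw [← hsum2]; exact habs1
    _ = ε * |t| / 2 * n + (ε * |t| * q / 2 + B2/δ^2 * (t^2*q)) := by
        rw [hC2def, add_mul, hmid]
    _ ≤ ε0 * |t| / 2 + ε0 * |t| / 2 := by linarith only [hfirst, hsecond]
    _ = ε0 * |t| := by ring
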